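/- Let G be a connected simple graph, S a mixed resolving set of G, and x ∈ S. Then |S| ≥ 1 + ⌈log₂(1 + deg(x))⌉. -/

import Mathlib

open SimpleGraph

/-- Distance from a vertex `w` to an edge `e` (as a `Sym2`). -/
noncomputable def edist {V : Type*} (G : SimpleGraph V) (w : V) (e : Sym2 V) : Nat :=
  Sym2.lift ⟨fun u v => min (G.dist w u) (G.dist w v), fun u v => min_comm _ _⟩ e

/-- `S` is a mixed resolving set: every two distinct elements of `V ∪ E`
are distinguished by the distance to some vertex of `S`. -/
def MixedResolvingSet {V : Type*} (G : SimpleGraph V) (S : Set V) : Prop :=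
  (∀ u v : V, u ≠ v → ∃ w ∈ S, G.dist w u ≠ G.dist w v) ∧
  (∀ e ∈ G.edgeSet, ∀ f ∈ G.edgeSet, e ≠ f → ∃ w ∈ S, edist G w e ≠ edist G w f) ∧
  (∀ u : V, ∀ e ∈ G.edgeSet, ∃ w ∈ S, G.dist w u ≠ edist G w e)

/-- The mixed metric dimension of `G`. -/
noncomputable def mixedDim {V : Type*} (G : SimpleGraph V) : Nat :=
  sInf {n | ∃ S : Set V, MixedResolvingSet G S ∧ S.ncard = n}

lemma edist_mk {V : Type*} (G : SimpleGraph V) (w u v : V) :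
    edist G w s(u, v) = min (G.dist w u) (G.dist w v) := rfl

lemma edist_cases {V : Type*} (G : SimpleGraph V) (hG : G.Connected) {x y : V}
    (hadj : G.Adj x y) (w : V) :
    edist G w s(x, y) = G.dist w x ∨ edist G w s(x, y) + 1 = G.dist w x := by
  rw [edist_mk]
  rcases le_or_gt (G.dist w x) (G.dist w y) with h | h
  · left; exact min_eq_left h
  · right
    rw [min_eq_right h.le]
    have ht := hG.dist_triangle (u := w) (v := y) (w := x)
    have h1 : G.dist y x = 1 := dist_eq_one_iff_adj.mpr hadj.symm
    omega

theorem stmt_0 {V : Type*} [Fintype V] (G : SimpleGraph V) [DecidableRel G.Adj]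
    (hG : G.Connected) (S : Finset V) (hS : MixedResolvingSet G ↑S) (x : V) (hx : x ∈ S) :
    S.card ≥ 1 + Nat.clog 2 (1 + G.degree x) := by
  classical
  obtain ⟨h1, h2, h3⟩ := hS
  -- the map
  set T := S.erase x with hT
  have hedge : ∀ y ∈ G.neighborFinset x, s(x, y) ∈ G.edgeSet := by
    intro y hy
    rw [SimpleGraph.mem_edgeSet]
    exact (G.mem_neighborFinset x y).mp hy
  have hex0 : ∀ y, G.Adj x y → edist G x s(x, y) = 0 := by
    intro y _
    rw [edist_mk, SimpleGraph.dist_self]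
    simp
  let f : Option {y // y ∈ G.neighborFinset x} → ({w // w ∈ T} → Bool) :=
    fun o w => match o with
      | none => true
      | some y => decide (edist G w.1 s(x, y.1) = G.dist w.1 x)
  have hwx : ∀ w : {w // w ∈ T}, w.1 ≠ x := by
    intro w; exact Finset.ne_of_mem_erase w.2
  have hinj : Function.Injective f := by
    intro a b hab
    by_contra hne
    match a, b with
    | none, none => exact hne rfl
    | some y, none =>
      obtain ⟨w, hwS, hwd⟩ := h3 x s(x, y.1) (hedge y.1 y.2)
      have hwt : w ∈ T := by
        refine Finset.mem_erase.mpr ⟨fun heq => hwd ?_, hwS⟩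
        rw [heq, hex0 y.1 ((G.mem_neighborFinset x y.1).mp y.2), SimpleGraph.dist_self]
      have := congrFun hab ⟨w, hwt⟩
      simp only [f, decide_eq_true_eq] at this
      exact hwd this.symm
    | none, some y =>
      obtain ⟨w, hwS, hwd⟩ := h3 x s(x, y.1) (hedge y.1 y.2)
      have hwt : w ∈ T := by
        refine Finset.mem_erase.mpr ⟨fun heq => hwd ?_, hwS⟩
        rw [heq, hex0 y.1 ((G.mem_neighborFinset x y.1).mp y.2), SimpleGraph.dist_self]
      have := (congrFun hab ⟨w, hwt⟩).symm
      simp only [f, decide_eq_true_eq] at this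
      exact hwd this.symm
    | some y, some z =>
      have hyz : y.1 ≠ z.1 := by
        intro h; exact hne (by cases y; cases z; simp_all)
      have heee : s(x, y.1) ≠ s(x, z.1) := by
        intro h
        rw [Sym2.eq_iff] at h
        rcases h with ⟨-, h⟩ | ⟨h', h⟩
        · exact hyz h
        · exact hyz (h.trans h')
      obtain ⟨w, hwS, hwd⟩ := h2 s(x, y.1) (hedge y.1 y.2) s(x, z.1) (hedge z.1 z.2) heee
      have hwt : w ∈ T := by
        refine Finset.mem_erase.mpr ⟨fun heq => hwd ?_, hwS⟩
        rw [heq, hex0 y.1 ((G.mem_neighborFinset x y.1).mp y.2),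
          hex0 z.1 ((G.mem_neighborFinset x z.1).mp z.2)]
      have hkey := congrFun hab ⟨w, hwt⟩
      simp only [f, decide_eq_decide] at hkey
      have hy := edist_cases G hG ((G.mem_neighborFinset x y.1).mp y.2) w
      have hz := edist_cases G hG ((G.mem_neighborFinset x z.1).mp z.2) w
      rcases hy with hy | hy
      · rcases hz with hz | hz
        · exact hwd (hy.trans hz.symm)
        · have := hkey.mp hy; omega
      · rcases hz with hz | hz
        · have := hkey.mpr hz; omega
        · exact hwd (by omega)
  have hcard : Fintype.card (Option {y // y ∈ G.neighborFinset x}) ≤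
      Fintype.card ({w // w ∈ T} → Bool) := Fintype.card_le_of_injective f hinj
  rw [Fintype.card_option, Fintype.card_fun] at hcard
  simp only [Fintype.card_coe, Fintype.card_bool] at hcard
  rw [← SimpleGraph.card_neighborFinset_eq_degree]
  have hTcard : T.card = S.card - 1 := Finset.card_erase_of_mem hx
  have hle : 1 + (G.neighborFinset x).card ≤ 2 ^ (S.card - 1) := by
    rw [← hTcard]; omega
  have hclog : Nat.clog 2 (1 + (G.neighborFinset x).card) ≤ S.card - 1 :=
    (Nat.clog_le_iff_le_pow (by norm_num)).mpr hle
  have hS1 : 1 ≤ S.card := Finset.card_pos.mpr ⟨x, hx⟩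
  omega
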